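/- For any subset S of {1,...,n} and any integer r > n − |S|, the polynomial h²_r(S) lies in the type B coinvariant ideal I^B_n = (p_2, p_4, ..., p_{2n}) of ℂ[x_1,...,x_n], where h²_r(S) is obtained from h_r(S) by substituting x_i² for each x_i. -/

import Mathlib

open MvPolynomial

section Aux

open Finset

variable {n : ℕ}

noncomputable def hpoly (S : Finset (Fin n)) (r : ℕ) : MvPolynomial (Fin n) ℂ :=
  ∑ m ∈ S.sym r, ((m : Multiset (Fin n)).map X).prod

-- the "plain" power sum ideal
noncomputable def Ipow (n : ℕ) : Ideal (MvPolynomial (Fin n) ℂ) :=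
  Ideal.span ((fun k => psum (Fin n) ℂ k) '' Set.Icc 1 n)

lemma esymm_mem {k : ℕ} (h1 : 1 ≤ k) (h2 : k ≤ n) :
    esymm (Fin n) ℂ k ∈ Ipow n := by
  have hN := MvPolynomial.mul_esymm_eq_sum (Fin n) ℂ k
  have hterm : ∀ a ∈ {a ∈ Finset.HasAntidiagonal.antidiagonal k | a.1 < k},
      (-1 : MvPolynomial (Fin n) ℂ) ^ a.1 * esymm (Fin n) ℂ a.1 * psum (Fin n) ℂ a.2 ∈ Ipow n := by
    intro a ha
    simp only [Finset.mem_filter, Finset.HasAntidiagonal.mem_antidiagonal] at ha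
    apply Ideal.mul_mem_left
    apply Ideal.subset_span
    refine ⟨a.2, ?_, rfl⟩
    constructor
    · omega
    · omega
  have hmem : (k : MvPolynomial (Fin n) ℂ) * esymm (Fin n) ℂ k ∈ Ipow n := by
    rw [hN]
    exact Ideal.mul_mem_left _ _ (Ideal.sum_mem _ hterm)
  have hk : C ((k : ℂ))⁻¹ * ((k : MvPolynomial (Fin n) ℂ) * esymm (Fin n) ℂ k) = esymm (Fin n) ℂ k := by
    have : (k : MvPolynomial (Fin n) ℂ) = C (k : ℂ) := (MvPolynomial.C_eq_coe_nat (R:=ℂ) k).symm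
    rw [this, ← mul_assoc, ← C_mul, inv_mul_cancel₀ (by exact_mod_cast (by omega : k ≠ 0) : (k:ℂ) ≠ 0), C_1, one_mul]
  rw [← hk]
  exact Ideal.mul_mem_left _ _ hmem

lemma Ipow_constantCoeff {p : MvPolynomial (Fin n) ℂ} (hp : p ∈ Ipow n) :
    constantCoeff p = 0 := by
  have : Ipow n ≤ RingHom.ker (constantCoeff (R := ℂ) (σ := Fin n)) := by
    rw [Ipow, Ideal.span_le]
    rintro _ ⟨k, hk, rfl⟩
    simp only [Set.mem_Icc] at hk
    simp only [SetLike.mem_coe, RingHom.mem_ker, psum, map_sum, map_pow, constantCoeff_X]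
    simp [zero_pow (by omega : k ≠ 0)]
  exact this hp

lemma aeval_sub_constant_mem (q : MvPolynomial (Fin n) ℂ) :
    aeval (fun i : Fin n => esymm (Fin n) ℂ (i + 1)) q - C (constantCoeff q) ∈ Ipow n := by
  induction q using MvPolynomial.induction_on with
  | C a => simp
  | add p q hp hq =>
      have := Ideal.add_mem _ hp hq
      simpa [map_add, sub_add_sub_comm] using this
  | mul_X p i hp =>
      simp only [map_mul, aeval_X, map_mul, constantCoeff_X, mul_zero, map_zero,
        sub_zero]
      exact Ideal.mul_mem_left _ _ (esymm_mem (Nat.one_le_iff_ne_zero.mpr (by omega)) i.2)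

lemma symm_mem {p : MvPolynomial (Fin n) ℂ} (hs : p.IsSymmetric)
    (hc : constantCoeff p = 0) : p ∈ Ipow n := by
  obtain ⟨q, hq⟩ := esymmAlgHom_surjective (σ := Fin n) ℂ (le_of_eq (Fintype.card_fin n))
    ⟨p, hs⟩
  have hpq : p = aeval (fun i : Fin n => esymm (Fin n) ℂ (i + 1)) q := by
    have h := congrArg Subtype.val hq
    rw [esymmAlgHom_apply] at h
    exact h.symm
  have h1 := aeval_sub_constant_mem (n := n) q
  rw [← hpq] at h1
  have h2 : constantCoeff q = 0 := by
    have := Ipow_constantCoeff h1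
    rw [map_sub, hc, constantCoeff_C, zero_sub, neg_eq_zero] at this
    exact this
  rw [h2] at h1
  simpa using h1

lemma hpoly_univ (r : ℕ) : hpoly (Finset.univ : Finset (Fin n)) r = hsymm (Fin n) ℂ r := by
  rw [hpoly, Finset.sym_univ, hsymm]
  rfl

lemma constantCoeff_hpoly (S : Finset (Fin n)) {r : ℕ} (hr : 1 ≤ r) :
    constantCoeff (hpoly S r) = 0 := by
  rw [hpoly, map_sum]
  refine Finset.sum_eq_zero fun m hm => ?_
  rw [map_multiset_prod, Multiset.map_map]
  apply Multiset.prod_eq_zero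
  obtain ⟨a, ha⟩ := Multiset.card_pos_iff_exists_mem.mp
    (show 0 < Multiset.card (m : Multiset (Fin n)) by simp [m.2]; omega)
  exact Multiset.mem_map.mpr ⟨a, ha, by simp⟩

lemma hpoly_univ_mem {r : ℕ} (hr : 1 ≤ r) :
    hpoly (Finset.univ : Finset (Fin n)) r ∈ Ipow n := by
  refine symm_mem ?_ (constantCoeff_hpoly _ hr)
  rw [hpoly_univ]
  exact hsymm_isSymmetric (Fin n) ℂ r

lemma hpoly_insert {a : Fin n} {T : Finset (Fin n)} (h : a ∉ T) (r : ℕ) :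
    hpoly (insert a T) r = ∑ i ∈ Finset.range (r + 1), X a ^ i * hpoly T (r - i) := by
  classical
  rw [hpoly, ← Finset.sum_coe_sort ((insert a T).sym r)
    (fun m => ((m : Multiset (Fin n)).map X).prod)]
  rw [← Equiv.sum_comp (Finset.symInsertEquiv h).symm
    (fun m : { x // x ∈ (insert a T).sym r } => (((m : Sym (Fin n) r) : Multiset (Fin n)).map X).prod)]
  rw [← Finset.univ_sigma_univ, Finset.sum_sigma]
  rw [← Fin.sum_univ_eq_sum_range (fun i => X a ^ i * hpoly T (r - i)) (r + 1)]
  refine Finset.sum_congr rfl fun i _ => ?_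
  rw [hpoly, ← Finset.sum_coe_sort (T.sym ((r : ℕ) - (i : ℕ)))
    (fun m => ((m : Multiset (Fin n)).map X).prod), Finset.mul_sum]
  refine Finset.sum_congr rfl fun m _ => ?_
  simp only [Finset.symInsertEquiv_symm_apply_coe]
  rw [Sym.coe_fill]
  rw [Multiset.map_add, Multiset.prod_add, Sym.coe_replicate, Multiset.map_replicate, Multiset.prod_replicate]
  ring

lemma hpoly_rec {a : Fin n} {T : Finset (Fin n)} (h : a ∉ T) (s : ℕ) :
    hpoly T (s + 1) = hpoly (insert a T) (s + 1) - X a * hpoly (insert a T) s := by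
  rw [hpoly_insert h (s + 1), hpoly_insert h s, Finset.sum_range_succ', Finset.mul_sum]
  have he : ∀ i ∈ Finset.range (s + 1),
      X (R := ℂ) a ^ (i + 1) * hpoly T (s + 1 - (i + 1)) =
      X a * (X a ^ i * hpoly T (s - i)) := by
    intro i _
    rw [Nat.succ_sub_succ]
    ring
  rw [Finset.sum_congr rfl he]
  simp

lemma hpoly_mem : ∀ (m : ℕ) (T : Finset (Fin n)), Tᶜ.card = m →
    ∀ r, m < r → hpoly T r ∈ Ipow n := by
  intro m
  induction m with
  | zero =>
      intro T hT r hr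
      have hTu : T = Finset.univ := by
        have := Finset.card_eq_zero.mp hT
        rwa [Finset.compl_eq_empty_iff] at this
      subst hTu
      exact hpoly_univ_mem (by omega)
  | succ m ih =>
      intro T hT r hr
      obtain ⟨a, ha⟩ := Finset.card_pos.mp (show 0 < Tᶜ.card by omega)
      have haT : a ∉ T := Finset.mem_compl.mp ha
      have hins : (insert a T)ᶜ.card = m := by
        rw [Finset.compl_insert, Finset.card_erase_of_mem ha, hT]
        omega
      obtain ⟨s, rfl⟩ : ∃ s, r = s + 1 := ⟨r - 1, by omega⟩
      rw [hpoly_rec haT s]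
      exact sub_mem (ih _ hins _ (by omega)) (Ideal.mul_mem_left _ _ (ih _ hins s (by omega)))


end Aux

/-- `h²_r(S)`: the complete homogeneous symmetric polynomial of degree `r` in the
variables indexed by `S`, with each variable replaced by its square. -/
noncomputable def h2poly {n : ℕ} (S : Finset (Fin n)) (r : ℕ) : MvPolynomial (Fin n) ℂ :=
  ∑ m ∈ S.sym r, ((m : Multiset (Fin n)).map (fun i => X i ^ 2)).prod

/-- for `r > n − |S|`, `h²_r(S)` lies in the type B coinvariant ideal
`I^B_n = (p_2, p_4, …, p_{2n})`. -/
theorem stmt7 {n : ℕ} (S : Finset (Fin n)) (r : ℕ) (hr : n - S.card < r) :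
    h2poly S r ∈ Ideal.span ((fun k => ∑ i : Fin n, X i ^ (2 * k)) '' Set.Icc 1 n) := by
  classical
  set J : Ideal (MvPolynomial (Fin n) ℂ) :=
    Ideal.span ((fun k => ∑ i : Fin n, X i ^ (2 * k)) '' Set.Icc 1 n) with hJ
  set sq : MvPolynomial (Fin n) ℂ →ₐ[ℂ] MvPolynomial (Fin n) ℂ :=
    aeval (fun i => X i ^ 2) with hsq
  have key : h2poly S r = sq (hpoly S r) := by
    rw [h2poly, hpoly, map_sum]
    refine Finset.sum_congr rfl fun m _ => ?_
    rw [map_multiset_prod, Multiset.map_map]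
    congr 1
    refine Multiset.map_congr rfl fun i _ => ?_
    simp [hsq]
  rw [key]
  have hmem : hpoly S r ∈ Ipow n := by
    refine hpoly_mem (Sᶜ.card) S rfl r ?_
    rw [Finset.card_compl, Fintype.card_fin]
    exact hr
  have hle : Ipow n ≤ Ideal.comap sq.toRingHom J := by
    rw [Ipow, Ideal.span_le]
    rintro _ ⟨k, hk, rfl⟩
    simp only [SetLike.mem_coe, Ideal.mem_comap]
    have : sq.toRingHom (psum (Fin n) ℂ k) = ∑ i : Fin n, X i ^ (2 * k) := by
      rw [psum, map_sum]
      refine Finset.sum_congr rfl fun i _ => ?_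
      simp [hsq, ← pow_mul, mul_comm]
    rw [this]
    exact Ideal.subset_span ⟨k, hk, rfl⟩
  exact hle hmem
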